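/- arXiv:1510.04158 — 3 statements merged into one kernel-verified Lean document; each statement's English description precedes it below -/
import Mathlib

section
/- Let P be an N×N complex matrix. For each column index j and each row index k, the entry P k j is determined up to a single global phase common to all entries, by the moduli |P k j| for all k, j together with the products (P k 1)·conj(P k j) for all k and all j ≥ 2, provided P k 1 ≠ 0 for all k and moreover the first column entries' phases are consistent. Formally: if P and Q are N×N complex matrices with |P k j| = |Q k j| for all k,j, with (P k 1)·conj(P k j) = (Q k 1)·conj(Q k j) for all k,j, and with (P 1 1)·conj(P k 1) = (Q 1 1)·conj(Q k 1) for all k, and if all entries of P and Q are nonzero, then there exists a unimodular complex number c with Q = c • P. -/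
theorem stmt_5 (N : ℕ) [NeZero N] (P Q : Matrix (Fin N) (Fin N) ℂ)
    (hP : ∀ k j, P k j ≠ 0) (hQ : ∀ k j, Q k j ≠ 0)
    (habs : ∀ k j, ‖P k j‖ = ‖Q k j‖)
    (hcross : ∀ k j, P k 0 * (starRingEnd ℂ) (P k j) = Q k 0 * (starRingEnd ℂ) (Q k j))
    (hfirst : ∀ k, P 0 0 * (starRingEnd ℂ) (P k 0) = Q 0 0 * (starRingEnd ℂ) (Q k 0)) :
    ∃ c : ℂ, ‖c‖ = 1 ∧ Q = c • P := by
  have hP00 := hP 0 0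
  refine ⟨Q 0 0 / P 0 0, ?_, ?_⟩
  · rw [norm_div, ← habs 0 0, div_self (norm_ne_zero_iff.mpr hP00)]
  · funext k j
    have A := hfirst k
    have B' := congrArg (starRingEnd ℂ) (hcross k j)
    simp only [map_mul, Complex.conj_conj] at B'
    have hc0 : (starRingEnd ℂ) (P k 0) ≠ 0 := by
      simpa using hP k 0
    have key : Q k j * P 0 0 * (starRingEnd ℂ) (P k 0)
        = Q 0 0 * P k j * (starRingEnd ℂ) (P k 0) := by
      linear_combination Q k j * A - Q 0 0 * B'
    have key2 := mul_right_cancel₀ hc0 key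
    simp only [Matrix.smul_apply, smul_eq_mul]
    field_simp
    linear_combination key2
end

section
/- Let Ξ, Ξ' : Fin m → ℂ be sequences with all entries nonzero, such that |Ξ k| = |Ξ' k| for all k and Ξ k · conj(Ξ (k+1)) = Ξ' k · conj(Ξ' (k+1)) for all k < m−1. Then there exists a unimodular c ∈ ℂ with Ξ' k = c · Ξ k for all k. -/
theorem stmt_12 (m : ℕ) (hm : 1 ≤ m) (Ξ Ξ' : Fin m → ℂ)
    (hne : ∀ k, Ξ k ≠ 0) (hne' : ∀ k, Ξ' k ≠ 0)
    (habs : ∀ k, ‖Ξ k‖ = ‖Ξ' k‖)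
    (hcross : ∀ k : Fin m, ∀ h : k.1 + 1 < m,
      Ξ k * (starRingEnd ℂ) (Ξ ⟨k.1 + 1, h⟩) = Ξ' k * (starRingEnd ℂ) (Ξ' ⟨k.1 + 1, h⟩)) :
    ∃ c : ℂ, ‖c‖ = 1 ∧ ∀ k, Ξ' k = c * Ξ k := by
  have h0 : 0 < m := hm
  set c : ℂ := Ξ' ⟨0, h0⟩ / Ξ ⟨0, h0⟩ with hc
  have habsc : ‖c‖ = 1 := by
    rw [hc, norm_div, ← habs ⟨0, h0⟩, div_self]
    simpa using (hne ⟨0, h0⟩)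
  have hcc : c * (starRingEnd ℂ) c = 1 := by
    rw [Complex.mul_conj]
    norm_cast
    rw [Complex.normSq_eq_norm_sq, habsc]; norm_num
  refine ⟨c, habsc, ?_⟩
  have key : ∀ n (h : n < m), Ξ' ⟨n, h⟩ = c * Ξ ⟨n, h⟩ := by
    intro n
    induction n with
    | zero =>
      intro h
      rw [hc, div_mul_cancel₀ _ (hne ⟨0, h0⟩)]
    | succ n ih =>
      intro h
      have hn : n < m := Nat.lt_of_succ_lt h
      have hcr := hcross ⟨n, hn⟩ h
      rw [ih hn] at hcr
      have hcancel : (starRingEnd ℂ) (Ξ ⟨n + 1, h⟩) =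
          c * (starRingEnd ℂ) (Ξ' ⟨n + 1, h⟩) :=
        mul_left_cancel₀ (hne ⟨n, hn⟩) (by linear_combination hcr)
      have h1 : Ξ ⟨n + 1, h⟩ = (starRingEnd ℂ) c * Ξ' ⟨n + 1, h⟩ := by
        have := congrArg (starRingEnd ℂ) hcancel
        simpa using this
      rw [h1, ← mul_assoc, hcc, one_mul]
  intro k
  have := key k.1 k.2
  simpa using this
end

section
/- Let H, H' be N×N complex Hankel matrices with generating sequences Ξ, Ξ' : Fin (2N−1) → ℂ, all of whose values are nonzero. Suppose |Ξ k| = |Ξ' k| for all k, Ξ k · conj(Ξ (k+1)) = Ξ' k · conj(Ξ' (k+1)) for all k ≤ 2N−3, and Ξ 0, Ξ' 0 are both positive reals. Then H = H'. -/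
theorem stmt_15 (N : ℕ) (hN : 1 ≤ N) (H H' : Matrix (Fin N) (Fin N) ℂ)
    (Ξ Ξ' : Fin (2 * N - 1) → ℂ)
    (hH : ∀ r s : Fin N, H r s = Ξ ⟨r.1 + s.1, by have := r.2; have := s.2; omega⟩)
    (hH' : ∀ r s : Fin N, H' r s = Ξ' ⟨r.1 + s.1, by have := r.2; have := s.2; omega⟩)
    (hne : ∀ k, Ξ k ≠ 0) (hne' : ∀ k, Ξ' k ≠ 0)
    (habs : ∀ k, ‖Ξ k‖ = ‖Ξ' k‖)
    (hcross : ∀ k : Fin (2 * N - 1), ∀ h : k.1 + 1 < 2 * N - 1,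
      Ξ k * (starRingEnd ℂ) (Ξ ⟨k.1 + 1, h⟩) = Ξ' k * (starRingEnd ℂ) (Ξ' ⟨k.1 + 1, h⟩))
    (hpos : 0 < (Ξ ⟨0, by omega⟩).re ∧ (Ξ ⟨0, by omega⟩).im = 0)
    (hpos' : 0 < (Ξ' ⟨0, by omega⟩).re ∧ (Ξ' ⟨0, by omega⟩).im = 0) :
    H = H' := by
  have key : ∀ m : ℕ, ∀ h : m < 2 * N - 1, Ξ ⟨m, h⟩ = Ξ' ⟨m, h⟩ := by
    intro m
    induction m with
    | zero =>
      intro h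
      have h1 := habs ⟨0, h⟩
      rw [Complex.norm_def, Complex.norm_def, Complex.normSq_apply, Complex.normSq_apply] at h1
      have h2 : (Ξ ⟨0, h⟩).re = (Ξ' ⟨0, h⟩).re := by
        rw [hpos.2, hpos'.2] at h1
        simp only [mul_zero, add_zero] at h1
        rw [Real.sqrt_mul_self (le_of_lt hpos.1), Real.sqrt_mul_self (le_of_lt hpos'.1)] at h1
        exact h1
      exact Complex.ext h2 (by rw [hpos.2, hpos'.2])
    | succ n ih =>
      intro h
      have hn : n < 2 * N - 1 := by omega
      have hc := hcross ⟨n, hn⟩ h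
      rw [ih hn] at hc
      have h4 := mul_left_cancel₀ (hne' ⟨n, hn⟩) hc
      exact (starRingEnd ℂ).injective h4
  funext r s
  rw [hH, hH']
  exact key _ _
end
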